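/- Let 𝒰 and 𝒱 be compact metric spaces and let k : 𝒰×𝒰 → ℝ and g : 𝒱×𝒱 → ℝ be continuous universal kernels (their RKHSs are dense in C(𝒰) and C(𝒱) respectively, in the sup norm). Then the Kronecker product pairwise kernel Γ((u,v),(ū,v̄)) = k(u,ū)·g(v,v̄) is a universal kernel on 𝒰×𝒱, i.e., its RKHS is dense in C(𝒰×𝒱). -/
import Mathlib


open scoped BoundedContinuousFunction

/-- A continuous kernel on a compact space is universal if the span of its sections
(the functions `x ↦ k x u`), which is dense in its RKHS, is dense in `C(X, ℝ)` with
the uniform norm. -/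
def IsUniversalKernel {X : Type*} [TopologicalSpace X] [CompactSpace X]
    (k : X → X → ℝ) : Prop :=
  Dense ((Submodule.span ℝ {h : C(X, ℝ) | ∃ u : X, ∀ x : X, h x = k x u} :
    Submodule ℝ C(X, ℝ)) : Set C(X, ℝ))

/-- The Kronecker product pairwise kernel of two continuous universal kernels on
compact metric spaces is a universal kernel on the product space. -/
theorem stmt_15 {U V : Type*} [MetricSpace U] [CompactSpace U]
    [MetricSpace V] [CompactSpace V]
    (k : U → U → ℝ) (g : V → V → ℝ)
    (hk : Continuous fun p : U × U => k p.1 p.2)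
    (hg : Continuous fun p : V × V => g p.1 p.2)
    (huk : IsUniversalKernel k) (hug : IsUniversalKernel g) :
    IsUniversalKernel (fun p q : U × V => k p.1 q.1 * g p.2 q.2) := by
  classical
  set Sk : Set C(U, ℝ) := {h | ∃ u : U, ∀ x : U, h x = k x u} with hSk
  set Sg : Set C(V, ℝ) := {h | ∃ v : V, ∀ x : V, h x = g x v} with hSg
  set SΓ : Set C(U × V, ℝ) :=
    {h | ∃ q : U × V, ∀ p : U × V, h p = k p.1 q.1 * g p.2 q.2} with hSΓ
  -- tensor map
  set T : C(U, ℝ) → C(V, ℝ) → C(U × V, ℝ) := fun a b =>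
    (a.comp (ContinuousMap.fst)) * (b.comp (ContinuousMap.snd)) with hT
  have hT_apply : ∀ a b (p : U × V), T a b p = a p.1 * b p.2 := fun a b p => rfl
  -- bilinearity of T into the span of SΓ
  have hTmem : ∀ a ∈ Submodule.span ℝ Sk, ∀ b ∈ Submodule.span ℝ Sg,
      T a b ∈ Submodule.span ℝ SΓ := by
    intro a ha
    induction ha using Submodule.span_induction with
    | mem a hmem =>
      obtain ⟨u, hu⟩ := hmem
      intro b hb
      induction hb using Submodule.span_induction with
      | mem b hbmem =>
        obtain ⟨v, hv⟩ := hbmem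
        exact Submodule.subset_span ⟨(u, v), fun p => by
          rw [hT_apply, hu, hv]⟩
      | zero =>
        have : T a 0 = 0 := by ext p; simp [hT_apply]
        rw [this]; exact Submodule.zero_mem _
      | add x y hx hy ihx ihy =>
        have : T a (x + y) = T a x + T a y := by
          ext p; simp [hT_apply, mul_add]
        rw [this]; exact Submodule.add_mem _ ihx ihy
      | smul r x hx ihx =>
        have : T a (r • x) = r • T a x := by
          ext p; simp [hT_apply]; ring
        rw [this]; exact Submodule.smul_mem _ _ ihx
    | zero =>
      intro b hb
      have : T 0 b = 0 := by ext p; simp [hT_apply]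
      rw [this]; exact Submodule.zero_mem _
    | add x y hx hy ihx ihy =>
      intro b hb
      have : T (x + y) b = T x b + T y b := by
        ext p; simp [hT_apply, add_mul]
      rw [this]; exact Submodule.add_mem _ (ihx b hb) (ihy b hb)
    | smul r x hx ihx =>
      intro b hb
      have : T (r • x) b = r • T x b := by
        ext p; simp [hT_apply]; ring
      rw [this]; exact Submodule.smul_mem _ _ (ihx b hb)
  -- T is continuous
  have hTcont : Continuous fun ab : C(U, ℝ) × C(V, ℝ) => T ab.1 ab.2 := by
    apply Continuous.mul
    · exact (ContinuousMap.continuous_precomp _).comp continuous_fst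
    · exact (ContinuousMap.continuous_precomp _).comp continuous_snd
  -- every pure tensor is in the closure of the span of SΓ
  have key : ∀ (a : C(U, ℝ)) (b : C(V, ℝ)),
      T a b ∈ closure ((Submodule.span ℝ SΓ : Submodule ℝ C(U × V, ℝ)) :
        Set C(U × V, ℝ)) := by
    intro a b
    have h1 : (a, b) ∈ closure (((Submodule.span ℝ Sk : Submodule ℝ C(U, ℝ)) :
        Set C(U, ℝ)) ×ˢ ((Submodule.span ℝ Sg : Submodule ℝ C(V, ℝ)) :
        Set C(V, ℝ))) := by
      rw [closure_prod_eq]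
      exact ⟨huk a, hug b⟩
    have h2 := image_closure_subset_closure_image
      (f := fun ab : C(U, ℝ) × C(V, ℝ) => T ab.1 ab.2)
      (s := ((Submodule.span ℝ Sk : Submodule ℝ C(U, ℝ)) : Set C(U, ℝ)) ×ˢ
        ((Submodule.span ℝ Sg : Submodule ℝ C(V, ℝ)) : Set C(V, ℝ))) hTcont
    have h3 : T a b ∈ closure ((fun ab : C(U, ℝ) × C(V, ℝ) => T ab.1 ab.2) ''
        (((Submodule.span ℝ Sk : Submodule ℝ C(U, ℝ)) : Set C(U, ℝ)) ×ˢ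
         ((Submodule.span ℝ Sg : Submodule ℝ C(V, ℝ)) : Set C(V, ℝ)))) :=
      h2 ⟨(a, b), h1, rfl⟩
    refine closure_mono ?_ h3
    rintro _ ⟨⟨a', b'⟩, ⟨ha', hb'⟩, rfl⟩
    exact hTmem a' ha' b' hb'
  -- the set of pure tensors is a submonoid
  set S : Set C(U × V, ℝ) :=
    Set.range (fun ab : C(U, ℝ) × C(V, ℝ) => T ab.1 ab.2) with hS
  have hS_closure : S ⊆ closure ((Submodule.span ℝ SΓ :
      Submodule ℝ C(U × V, ℝ)) : Set C(U × V, ℝ)) := by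
    rintro _ ⟨⟨a, b⟩, rfl⟩; exact key a b
  let M : Submonoid C(U × V, ℝ) :=
    { carrier := S
      one_mem' := ⟨(1, 1), by ext p; simp [hT_apply]⟩
      mul_mem' := by
        rintro _ _ ⟨⟨a, b⟩, rfl⟩ ⟨⟨a', b'⟩, rfl⟩
        exact ⟨(a * a', b * b'), by ext p; simp [hT_apply]; ring⟩ }
  set A : Subalgebra ℝ C(U × V, ℝ) := Algebra.adjoin ℝ S with hA
  -- A separates points
  have hA_sep : A.SeparatesPoints := by
    rintro ⟨pu, pv⟩ ⟨qu, qv⟩ hpq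
    rcases (by
      by_contra h
      push_neg at h
      exact hpq (Prod.ext h.1 h.2) : pu ≠ qu ∨ pv ≠ qv) with h | h
    · refine ⟨_, ⟨T ⟨fun x => dist x qu, (continuous_id.dist continuous_const)⟩ 1,
        Algebra.subset_adjoin ⟨(_, 1), rfl⟩, rfl⟩, ?_⟩
      simp [hT_apply]
      exact h
    · refine ⟨_, ⟨T 1 ⟨fun x => dist x qv, (continuous_id.dist continuous_const)⟩,
        Algebra.subset_adjoin ⟨(1, _), rfl⟩, rfl⟩, ?_⟩
      simp [hT_apply]
      exact h
  have hA_dense := ContinuousMap.subalgebra_topologicalClosure_eq_top_of_separatesPoints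
    A hA_sep
  -- A is contained in the closure of the span of SΓ
  have hA_le : (A : Set C(U × V, ℝ)) ⊆ closure ((Submodule.span ℝ SΓ :
      Submodule ℝ C(U × V, ℝ)) : Set C(U × V, ℝ)) := by
    intro x hx
    have hx' : x ∈ Subalgebra.toSubmodule (Algebra.adjoin ℝ S) := hx
    rw [Algebra.adjoin_eq_span] at hx'
    have hMc : (Submonoid.closure S : Set C(U × V, ℝ)) = S := by
      have : Submonoid.closure S = M := Submonoid.closure_eq M
      rw [this]
      rfl
    rw [hMc] at hx'
    have : Submodule.span ℝ S ≤ (Submodule.span ℝ SΓ).topologicalClosure := by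
      rw [Submodule.span_le]
      exact fun y hy => hS_closure hy
    exact this hx'
  -- conclude
  rw [IsUniversalKernel, dense_iff_closure_eq]
  apply Set.eq_univ_of_univ_subset
  have h1 : closure (A : Set C(U × V, ℝ)) = Set.univ := by
    have := congrArg (fun B : Subalgebra ℝ C(U × V, ℝ) => (B : Set C(U × V, ℝ)))
      hA_dense
    simpa [Subalgebra.topologicalClosure] using this
  calc Set.univ = closure (A : Set C(U × V, ℝ)) := h1.symm
    _ ⊆ closure (closure ((Submodule.span ℝ SΓ : Submodule ℝ C(U × V, ℝ)) :
        Set C(U × V, ℝ))) := closure_mono hA_le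
    _ = _ := closure_closure
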